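/- Let D be a local integral domain, Q a prime ideal of D such that Q = Q·D_Q and D/Q is a valuation domain, and let A = D_Q. Then there is no element z ∈ A with z ∉ D and z⁻¹ ∉ D. Conversely, if A is an overring of a local domain D such that no z ∈ A satisfies z, z⁻¹ ∉ D, and A ≠ D is a ring, then A is local, its maximal ideal is a prime ideal Q of D with Q = Q·D_Q, A = D_Q, and D/Q is a valuation domain. -/

import Mathlib

lemma subring_isUnit_iff {K : Type*} [Field K] (A : Subring K) {x : K} (hx : x ∈ A) :
    IsUnit (⟨x, hx⟩ : A) ↔ x ≠ 0 ∧ x⁻¹ ∈ A := by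
  constructor
  · intro h
    obtain ⟨b, hb⟩ := isUnit_iff_exists_inv.mp h
    have hb' : x * (b : K) = 1 := congrArg Subtype.val hb
    have hx0 : x ≠ 0 := by rintro rfl; simp at hb'
    have : x⁻¹ = (b : K) := inv_eq_of_mul_eq_one_right hb'
    exact ⟨hx0, this ▸ b.2⟩
  · rintro ⟨h0, hinv⟩
    exact isUnit_iff_exists_inv.mpr ⟨⟨x⁻¹, hinv⟩, Subtype.ext (mul_inv_cancel₀ h0)⟩

/-- **Remark 4.10.**
Let `D` be a local integral domain with quotient field `K`.
(1) If `Q` is a prime ideal of `D` with `Q = Q·D_Q` (every fraction `a/s` with `a ∈ Q`,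
`s ∉ Q` already lies in `Q`) and `D/Q` is a valuation domain (for `u, v ∉ Q`, `u/v ∈ D`
or `v/u ∈ D`), then no element `z` of `A = D_Q` satisfies both `z ∉ D` and `z⁻¹ ∉ D`.
(2) Conversely, if `A` is an overring of `D` with `A ≠ D` such that no `z ∈ A` has both
`z ∉ D` and `z⁻¹ ∉ D`, then `A` is local, its maximal ideal (set of nonunits) is a prime
ideal `Q` of `D` with `Q = Q·D_Q`, `A = D_Q`, and `D/Q` is a valuation domain. -/
theorem overring_with_no_doubly_external_element
    {K : Type*} [Field K] (D : Subring K) [IsLocalRing D]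
    (hfrac : ∀ x : K, ∃ a ∈ D, ∃ b ∈ D, b ≠ 0 ∧ x = a / b) :
    (∀ Q : Ideal D, Q.IsPrime →
      (∀ a s : D, a ∈ Q → s ∉ Q → ∃ q : D, q ∈ Q ∧ (a : K) / (s : K) = q) →
      (∀ u v : D, u ∉ Q → v ∉ Q → ((u : K) / (v : K) ∈ D ∨ (v : K) / (u : K) ∈ D)) →
      ¬ ∃ z : K, (∃ a s : D, s ∉ Q ∧ z = (a : K) / (s : K)) ∧ z ∉ D ∧ z⁻¹ ∉ D) ∧
    (∀ A : Subring K, D ≤ A → A ≠ D →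
      (∀ z ∈ A, ¬(z ∉ D ∧ z⁻¹ ∉ D)) →
      IsLocalRing A ∧
        ∃ Q : Ideal D, Q.IsPrime ∧
          ((A : Set K) = {x : K | ∃ a s : D, s ∉ Q ∧ x = (a : K) / (s : K)}) ∧
          (∀ x : K, (hx : x ∈ A) → (¬ IsUnit (⟨x, hx⟩ : A) ↔
            ∃ hq : x ∈ D, (⟨x, hq⟩ : D) ∈ Q)) ∧
          (∀ a s : D, a ∈ Q → s ∉ Q → ∃ q : D, q ∈ Q ∧ (a : K) / (s : K) = q) ∧
          (∀ u v : D, u ∉ Q → v ∉ Q →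
            ((u : K) / (v : K) ∈ D ∨ (v : K) / (u : K) ∈ D))) := by
  constructor
  · -- Part 1
    rintro Q hQ hdiv hval ⟨z, ⟨a, s, hs, rfl⟩, hzD, hzID⟩
    by_cases ha : a ∈ Q
    · obtain ⟨q, hq, he⟩ := hdiv a s ha hs
      exact hzD (he ▸ q.2)
    · by_cases ha0 : (a : K) = 0
      · exact hzD (by rw [ha0, zero_div]; exact D.zero_mem)
      · rcases hval a s ha hs with h | h
        · exact hzD h
        · rw [inv_div] at hzID
          exact hzID h
  · -- Part 2
    intro A hDA hne hcomp
    -- nonunits of A lie in D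
    have hnonunit_mem : ∀ (z : K) (hz : z ∈ A), ¬ IsUnit (⟨z, hz⟩ : A) → z ∈ D := by
      intro z hz hnu
      by_cases h0 : z = 0
      · exact h0 ▸ D.zero_mem
      by_contra hzD
      have hinv : z⁻¹ ∉ A := by
        intro hinvA
        exact hnu ((subring_isUnit_iff A hz).mpr ⟨h0, hinvA⟩)
      exact hcomp z hz ⟨hzD, fun h => hinv (hDA h)⟩
    -- A is local
    have hadd : ∀ a b : A, a ∈ nonunits A → b ∈ nonunits A → a + b ∈ nonunits A := by
      intro a b ha hb hab
      have ha' : ¬ IsUnit a := ha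
      have hb' : ¬ IsUnit b := hb
      have haK : (a : K) ∈ D := hnonunit_mem a a.2 (by simpa using ha')
      have hbK : (b : K) ∈ D := hnonunit_mem b b.2 (by simpa using hb')
      have hab' : IsUnit (⟨((a : K) + (b : K)), A.add_mem a.2 b.2⟩ : A) := by
        convert hab using 1
        exact Subtype.ext (by simp)
      rw [subring_isUnit_iff] at hab'
      obtain ⟨hs0, hw⟩ := hab'
      set w : K := ((a : K) + (b : K))⁻¹ with hwdef
      have hwA : w ∈ A := hw
      have hsum : (a : K) * w + (b : K) * w = 1 := by
        rw [← add_mul, mul_inv_cancel₀ hs0]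
      -- a ≠ 0 and b ≠ 0
      have ha0 : (a : K) ≠ 0 := by
        rintro h
        apply hb'
        have h' : a = 0 := Subtype.ext h
        rw [h', zero_add] at hab
        exact hab
      have hb0 : (b : K) ≠ 0 := by
        rintro h
        apply ha'
        have h' : b = 0 := Subtype.ext h
        rw [h', add_zero] at hab
        exact hab
      have hw0 : w ≠ 0 := inv_ne_zero hs0
      -- a*w ∈ D
      have key : ∀ (x : K) (hxA : x ∈ A), x ≠ 0 → ¬ IsUnit (⟨x, hxA⟩ : A) → x * w ∈ D := by
        intro x hxA hx0 hxu
        have hxwA : x * w ∈ A := A.mul_mem hxA hwA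
        by_contra hxwD
        have hinvD : (x * w)⁻¹ ∈ D := by
          by_contra hinvD
          exact hcomp (x * w) hxwA ⟨hxwD, hinvD⟩
        apply hxu
        rw [subring_isUnit_iff A hxA]
        refine ⟨hx0, ?_⟩
        have : x⁻¹ = w * (x * w)⁻¹ := by
          field_simp
        rw [this]
        exact A.mul_mem hwA (hDA hinvD)
      have hawD : (a : K) * w ∈ D := key a a.2 ha0 (by simpa using ha')
      have hbwD : (b : K) * w ∈ D := key b b.2 hb0 (by simpa using hb')
      have honeD : (⟨(a : K) * w, hawD⟩ : D) + ⟨(b : K) * w, hbwD⟩ = 1 := by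
        exact Subtype.ext (by simpa using hsum)
      -- in D local, one of them is a unit
      have := IsLocalRing.isUnit_or_isUnit_of_add_one honeD
      -- either way contradiction
      rcases this with h | h <;> rw [subring_isUnit_iff] at h
      · obtain ⟨hne0, hinv⟩ := h
        apply ha'
        have : IsUnit (⟨(a : K), a.2⟩ : A) := by
          rw [subring_isUnit_iff A a.2]
          refine ⟨ha0, ?_⟩
          have : (a : K)⁻¹ = w * ((a : K) * w)⁻¹ := by field_simp
          rw [this]
          exact A.mul_mem hwA (hDA hinv)
        simpa using this
      · obtain ⟨hne0, hinv⟩ := h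
        apply hb'
        have : IsUnit (⟨(b : K), b.2⟩ : A) := by
          rw [subring_isUnit_iff A b.2]
          refine ⟨hb0, ?_⟩
          have : (b : K)⁻¹ = w * ((b : K) * w)⁻¹ := by field_simp
          rw [this]
          exact A.mul_mem hwA (hDA hinv)
        simpa using this
    haveI hALocal : IsLocalRing A := IsLocalRing.of_nonunits_add hadd
    refine ⟨hALocal, ?_⟩
    set Q : Ideal D := (IsLocalRing.maximalIdeal A).comap (Subring.inclusion hDA) with hQdef
    have hQmem : ∀ d : D, d ∈ Q ↔ ¬ IsUnit (⟨(d : K), hDA d.2⟩ : A) := by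
      intro d
      rw [hQdef, Ideal.mem_comap, IsLocalRing.mem_maximalIdeal, mem_nonunits_iff]
      rfl
    have hQprime : Q.IsPrime := Ideal.IsPrime.comap _
    refine ⟨Q, hQprime, ?_, ?_, ?_, ?_⟩
    · -- A = D_Q as sets
      ext z
      simp only [Set.mem_setOf_eq, SetLike.mem_coe]
      constructor
      · intro hz
        by_cases hzD : z ∈ D
        · refine ⟨⟨z, hzD⟩, 1, ?_, by simp⟩
          rw [hQmem]
          simp only [not_not]
          exact (subring_isUnit_iff A (hDA D.one_mem)).mpr (by simp [A.one_mem])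
        · have h0 : z ≠ 0 := fun h => hzD (h ▸ D.zero_mem)
          have hzi : z⁻¹ ∈ D := by
            by_contra hzi
            exact hcomp z hz ⟨hzD, hzi⟩
          refine ⟨1, ⟨z⁻¹, hzi⟩, ?_, by simp⟩
          rw [hQmem]
          simp only [not_not]
          exact (subring_isUnit_iff A (hDA hzi)).mpr ⟨inv_ne_zero h0, by simpa using hz⟩
      · rintro ⟨a, s, hs, rfl⟩
        rw [hQmem, not_not, subring_isUnit_iff] at hs
        obtain ⟨hs0, hsi⟩ := hs
        rw [div_eq_mul_inv]
        exact A.mul_mem (hDA a.2) hsi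
    · -- maximal ideal characterization
      intro x hx
      constructor
      · intro hnu
        have hxD : x ∈ D := hnonunit_mem x hx hnu
        refine ⟨hxD, ?_⟩
        rw [hQmem]
        exact hnu
      · rintro ⟨hq, hQx⟩
        rw [hQmem] at hQx
        exact hQx
    · -- divided
      intro a s ha hs
      rw [hQmem] at ha
      rw [hQmem, not_not, subring_isUnit_iff] at hs
      obtain ⟨hs0, hsi⟩ := hs
      have hqA : (a : K) / (s : K) ∈ A := by
        rw [div_eq_mul_inv]; exact A.mul_mem (hDA a.2) hsi
      have hqnu : ¬ IsUnit (⟨(a : K) / (s : K), hqA⟩ : A) := by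
        intro hu
        rw [subring_isUnit_iff] at hu
        obtain ⟨hq0, hqi⟩ := hu
        apply ha
        rw [subring_isUnit_iff]
        have ha0 : (a : K) ≠ 0 := fun h => hq0 (by simp [h])
        refine ⟨ha0, ?_⟩
        have : (a : K)⁻¹ = ((a : K) / (s : K))⁻¹ * (s : K)⁻¹ := by
          field_simp
        rw [this]
        exact A.mul_mem hqi hsi
      have hqD : (a : K) / (s : K) ∈ D := hnonunit_mem _ hqA hqnu
      refine ⟨⟨(a : K) / (s : K), hqD⟩, ?_, rfl⟩
      rw [hQmem]
      exact hqnu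
    · -- valuation
      intro u v hu hv
      rw [hQmem, not_not, subring_isUnit_iff] at hu hv
      obtain ⟨hu0, hui⟩ := hu
      obtain ⟨hv0, hvi⟩ := hv
      have hA : (u : K) / (v : K) ∈ A := by
        rw [div_eq_mul_inv]; exact A.mul_mem (hDA u.2) hvi
      by_cases h : (u : K) / (v : K) ∈ D
      · exact Or.inl h
      · right
        have := hcomp _ hA
        rw [inv_div] at this
        by_contra h2
        exact this ⟨h, h2⟩
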